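/- The group presented with generators a_{ts} for 1 ≤ s < t ≤ n and relations a_{ts}a_{rq} = a_{rq}a_{ts} whenever (t-r)(t-q)(s-r)(s-q) > 0, and a_{ts}a_{sr} = a_{tr}a_{ts} = a_{sr}a_{tr} for 1 ≤ r < s < t ≤ n, is isomorphic to the braid group Br_n via the homomorphism sending a_{ts} to the element (σ_{t-1}σ_{t-2}⋯σ_{s+1}) σ_s (σ_{s+1}^{-1}⋯σ_{t-2}^{-1}σ_{t-1}^{-1}) of Br_n. -/

import Mathlib

/-- The braid relations on `m` generators `σ_1, …, σ_m` (0-indexed as `σ 0, …, σ (m-1)`):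
`σ_i σ_j = σ_j σ_i` for `|i - j| > 1` and `σ_i σ_{i+1} σ_i = σ_{i+1} σ_i σ_{i+1}`. -/
def braidRels (m : ℕ) : Set (FreeGroup (Fin m)) :=
  {r | (∃ i j : Fin m, (i : ℕ) + 1 < (j : ℕ) ∧
        r = FreeGroup.of i * FreeGroup.of j * (FreeGroup.of i)⁻¹ * (FreeGroup.of j)⁻¹) ∨
       (∃ i j : Fin m, (i : ℕ) + 1 = (j : ℕ) ∧
        r = FreeGroup.of i * FreeGroup.of j * FreeGroup.of i *
            (FreeGroup.of j * FreeGroup.of i * FreeGroup.of j)⁻¹)}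

/-- The braid group `Br_n` on `n` strands, presented with generators `σ_1, …, σ_{n-1}`
(0-indexed) and the braid relations. -/
abbrev BraidGroup (n : ℕ) : Type := PresentedGroup (braidRels (n - 1))

/-- The standard generator `σ_{i+1}` of `Br_n` (0-indexed: `σ i` is the paper's `σ_{i+1}`). -/
def σ {n : ℕ} (i : Fin (n - 1)) : BraidGroup n := PresentedGroup.of i

/-- The generator `σ_{i+1}` of `Br_n` for a natural-number index `i` (0-indexed), extended
by `1` outside the legal range. -/
def σ' {n : ℕ} (i : ℕ) : BraidGroup n := if h : i < n - 1 then σ ⟨i, h⟩ else 1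

/-- The word `σ_{t-1} σ_{t-2} ⋯ σ_{s+1}` in `Br_n` (0-indexed generators). -/
def descProd {n : ℕ} (s t : ℕ) : BraidGroup n :=
  ((List.range (t - 1 - s)).map fun k => σ' (n := n) (t - 1 - k)).prod

/-- The band generator `a_{ts} = (σ_{t-1} σ_{t-2} ⋯ σ_{s+1}) σ_s (σ_{s+1}⁻¹ ⋯ σ_{t-1}⁻¹)`
of `Br_n`, for `s < t` (0-indexed strands `0, …, n-1`). -/
def band {n : ℕ} (t s : ℕ) : BraidGroup n :=
  descProd s t * σ' s * (descProd s t)⁻¹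

/-- The index set for the Birman–Ko–Lee generators `a_{ts}`, `0 ≤ s < t ≤ n-1` (0-indexed). -/
def BKLGen (n : ℕ) : Type := {p : Fin n × Fin n // p.2 < p.1}

/-- The Birman–Ko–Lee relations: `a_{ts} a_{rq} = a_{rq} a_{ts}` whenever
`(t-r)(t-q)(s-r)(s-q) > 0`, and `a_{ts} a_{sr} = a_{tr} a_{ts} = a_{sr} a_{tr}` for `r < s < t`. -/
def bklRels (n : ℕ) : Set (FreeGroup (BKLGen n)) :=
  {w | (∃ a b : BKLGen n,
          ((a.1.1 : ℤ) - (b.1.1 : ℤ)) * ((a.1.1 : ℤ) - (b.1.2 : ℤ)) *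
            ((a.1.2 : ℤ) - (b.1.1 : ℤ)) * ((a.1.2 : ℤ) - (b.1.2 : ℤ)) > 0 ∧
          w = FreeGroup.of a * FreeGroup.of b * (FreeGroup.of b * FreeGroup.of a)⁻¹) ∨
       (∃ t s r : Fin n, ∃ h1 : s < t, ∃ h2 : r < s,
          w = FreeGroup.of (⟨(t, s), h1⟩ : BKLGen n) * FreeGroup.of (⟨(s, r), h2⟩ : BKLGen n) *
              (FreeGroup.of (⟨(t, r), h2.trans h1⟩ : BKLGen n) *
                FreeGroup.of (⟨(t, s), h1⟩ : BKLGen n))⁻¹) ∨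
       (∃ t s r : Fin n, ∃ h1 : s < t, ∃ h2 : r < s,
          w = FreeGroup.of (⟨(t, r), h2.trans h1⟩ : BKLGen n) *
              FreeGroup.of (⟨(t, s), h1⟩ : BKLGen n) *
              (FreeGroup.of (⟨(s, r), h2⟩ : BKLGen n) *
                FreeGroup.of (⟨(t, r), h2.trans h1⟩ : BKLGen n))⁻¹)}


namespace BKL

lemma presented_rel {α : Type*} {rels : Set (FreeGroup α)} {r : FreeGroup α} (h : r ∈ rels) :
    PresentedGroup.mk rels r = 1 := by
  have : r ∈ Subgroup.normalClosure rels := Subgroup.subset_normalClosure h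
  exact (QuotientGroup.eq_one_iff _).2 this

variable {n : ℕ}

lemma sigma'_comm {j k : ℕ} (h : j + 2 ≤ k) : Commute (σ' (n := n) j) (σ' k) := by
  unfold σ' σ
  split_ifs with hj hk hk
  · have hr : (FreeGroup.of (⟨j, hj⟩ : Fin (n-1)) * FreeGroup.of (⟨k, hk⟩ : Fin (n-1)) *
        (FreeGroup.of (⟨j, hj⟩ : Fin (n-1)))⁻¹ * (FreeGroup.of (⟨k, hk⟩ : Fin (n-1)))⁻¹)
        ∈ braidRels (n - 1) := Or.inl ⟨⟨j, hj⟩, ⟨k, hk⟩, by simpa using by omega, rfl⟩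
    have h1 := presented_rel hr
    rw [map_mul, map_mul, map_mul, map_inv, map_inv, mul_inv_eq_one,
      mul_inv_eq_iff_eq_mul] at h1
    exact h1
  · exact Commute.one_right _
  · exact Commute.one_left _
  · exact Commute.one_right _


lemma sigma'_braid {k : ℕ} (h : k + 2 ≤ n - 1) :
    σ' (n := n) k * σ' (k+1) * σ' k = σ' (k+1) * σ' k * σ' (k+1) := by
  have hk : k < n - 1 := by omega
  have hk1 : k + 1 < n - 1 := by omega
  unfold σ' σ
  rw [dif_pos hk, dif_pos hk1]
  have hr : (FreeGroup.of (⟨k, hk⟩ : Fin (n-1)) * FreeGroup.of (⟨k+1, hk1⟩ : Fin (n-1)) *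
      FreeGroup.of (⟨k, hk⟩ : Fin (n-1)) *
      (FreeGroup.of (⟨k+1, hk1⟩ : Fin (n-1)) * FreeGroup.of (⟨k, hk⟩ : Fin (n-1)) *
        FreeGroup.of (⟨k+1, hk1⟩ : Fin (n-1)))⁻¹) ∈ braidRels (n - 1) :=
    Or.inr ⟨⟨k, hk⟩, ⟨k+1, hk1⟩, rfl, rfl⟩
  have h1 := presented_rel hr
  rw [map_mul, map_mul, map_inv, map_mul, map_mul, mul_inv_eq_one] at h1
  exact h1

lemma conj_aux {G : Type*} [Group G] {x y : G} (h : x*y*x = y*x*y) :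
    y * x⁻¹ * y⁻¹ = x⁻¹ * y⁻¹ * x := by
  calc y * x⁻¹ * y⁻¹ = x⁻¹ * y⁻¹ * (y*x*y) * x⁻¹ * y⁻¹ := by group
    _ = x⁻¹ * y⁻¹ * (x*y*x) * x⁻¹ * y⁻¹ := by rw [← h]
    _ = x⁻¹ * y⁻¹ * x := by group

lemma descProd_triv {s t : ℕ} (h : t ≤ s + 1) : descProd (n := n) s t = 1 := by
  unfold descProd
  have : t - 1 - s = 0 := by omega
  rw [this]
  simp

lemma descProd_succ {s t : ℕ} (h : s + 1 < t) :
    descProd (n := n) s t = σ' (t-1) * descProd s (t-1) := by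
  unfold descProd
  have h1 : t - 1 - s = (t - 1 - 1 - s) + 1 := by omega
  rw [h1, List.range_succ_eq_map]
  rw [List.map_cons, List.prod_cons, List.map_map]
  have h2 : t - 1 - 0 = t - 1 := by omega
  rw [h2]
  congr 1
  apply congrArg
  apply List.map_congr_left
  intro k hk
  simp only [Function.comp_apply]
  congr 1
  omega

lemma band_base (s : ℕ) : band (n := n) (s+1) s = σ' s := by
  unfold band
  rw [descProd_triv (le_refl _)]
  simp

lemma band_succ {s t : ℕ} (h : s + 1 < t) :
    band (n := n) t s = σ' (t-1) * band (t-1) s * (σ' (t-1))⁻¹ := by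
  unfold band
  rw [descProd_succ h]
  group

lemma comm_sigma'_band (t : ℕ) : ∀ s k : ℕ, s < t → t ≤ n - 1 →
    (k + 2 ≤ s ∨ t + 1 ≤ k ∨ (s + 1 ≤ k ∧ k + 2 ≤ t)) →
    Commute (σ' (n := n) k) (band t s) := by
  induction t using Nat.strong_induction_on with
  | _ t IH =>
  intro s k hst htn hk
  rcases eq_or_lt_of_le (Nat.succ_le_of_lt hst) with h1 | h1
  · -- t = s + 1
    rw [← h1, band_base]
    rcases hk with h | h | h
    · exact sigma'_comm h
    · exact (sigma'_comm (by omega)).symm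
    · omega
  · rw [band_succ h1]
    by_cases hk2 : k = t - 2 ∧ s + 1 ≤ k
    · -- hard case
      obtain ⟨hkeq, hsk⟩ := hk2
      obtain ⟨u, rfl⟩ : ∃ u, t = u + 2 := ⟨k, by omega⟩
      obtain rfl : u = k := by omega
      have e1 : u + 2 - 1 = u + 1 := by omega
      have e2 : u + 1 - 1 = u := by omega
      rw [e1]
      have hsu : s + 1 < u + 1 := by omega
      rw [band_succ hsu, e2]
      set x := σ' (n := n) u with hx
      set y := σ' (n := n) (u+1) with hy
      set C := band (n := n) u s with hC
      have hbr : x * y * x = y * x * y := by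
        rw [hx, hy]; exact sigma'_braid (by omega)
      have hyC : Commute y C := by
        rw [hy, hC]
        exact IH u (by omega) s (u+1) (by omega) (by omega) (Or.inr (Or.inl (by omega)))
      show x * (y * (x * C * x⁻¹) * y⁻¹) = (y * (x * C * x⁻¹) * y⁻¹) * x
      calc x * (y * (x * C * x⁻¹) * y⁻¹)
          = (x*y*x) * C * x⁻¹ * y⁻¹ := by group
        _ = (y*x*y) * C * x⁻¹ * y⁻¹ := by rw [hbr]
        _ = y*x*(y*C)*(x⁻¹*y⁻¹) := by group
        _ = y*x*(C*y)*(x⁻¹*y⁻¹) := by rw [hyC.eq]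
        _ = y*x*C*(y*x⁻¹*y⁻¹) := by group
        _ = y*x*C*(x⁻¹*y⁻¹*x) := by rw [conj_aux hbr]
        _ = (y * (x * C * x⁻¹) * y⁻¹) * x := by group
    · -- easy case
      have c1 : Commute (σ' (n := n) k) (σ' (t-1)) := by
        rcases hk with h | h | h
        · exact sigma'_comm (by omega)
        · exact (sigma'_comm (by omega)).symm
        · exact sigma'_comm (by omega)
      have c2 : Commute (σ' (n := n) k) (band (t-1) s) := by
        apply IH (t-1) (by omega) s k (by omega) (by omega)
        rcases hk with h | h | h
        · exact Or.inl h
        · exact Or.inr (Or.inl (by omega))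
        · exact Or.inr (Or.inr ⟨h.1, by omega⟩)
      have := c1.mul_right (c2.mul_right c1.inv_right)
      rwa [← mul_assoc] at this

end BKL

namespace BKL
variable {n : ℕ}

lemma band_braid : ∀ s : ℕ, ∀ r : ℕ, r < s → s + 1 ≤ n - 1 →
    σ' (n := n) s * band s r * σ' s = band s r * σ' s * band s r := by
  intro s
  induction s using Nat.strong_induction_on with
  | _ s IH =>
  intro r hrs hsn
  rcases eq_or_lt_of_le (Nat.succ_le_of_lt hrs) with h1 | h1
  · rw [← h1, band_base]
    exact (sigma'_braid (by omega)).symm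
  · rw [band_succ h1]
    set x := σ' (n := n) s with hx
    set y := σ' (n := n) (s-1) with hy
    set C := band (n := n) (s-1) r with hC
    have hbr : y * x * y = x * y * x := by
      rw [hx, hy]
      have := sigma'_braid (n := n) (k := s - 1) (by omega)
      have e : s - 1 + 1 = s := by omega
      rwa [e] at this
    have hxC : Commute x C :=
      comm_sigma'_band (s-1) r s (by omega) (by omega) (Or.inr (Or.inl (by omega)))
    have IH' : y * C * y = C * y * C := IH (s-1) (by omega) r (by omega) (by omega)
    have e1 : y⁻¹ * x * y = x * y * x⁻¹ := by
      calc y⁻¹ * x * y = y⁻¹ * (x * y * x) * x⁻¹ := by group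
        _ = y⁻¹ * (y * x * y) * x⁻¹ := by rw [hbr]
        _ = x * y * x⁻¹ := by group
    have e2 : x * y * x⁻¹ * y⁻¹ = y⁻¹ * x := by
      calc x * y * x⁻¹ * y⁻¹ = y⁻¹ * (y * x * y) * x⁻¹ * y⁻¹ := by group
        _ = y⁻¹ * (x * y * x) * x⁻¹ * y⁻¹ := by rw [hbr]
        _ = y⁻¹ * x := by group
    symm
    calc (y*C*y⁻¹) * x * (y*C*y⁻¹)
        = y*C*(y⁻¹*x*y)*C*y⁻¹ := by group
      _ = y*C*(x*y*x⁻¹)*C*y⁻¹ := by rw [e1]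
      _ = y*(C*x)*y*(x⁻¹*C)*y⁻¹ := by group
      _ = y*(x*C)*y*(x⁻¹*C)*y⁻¹ := by rw [← hxC.eq]
      _ = y*(x*C)*y*(C*x⁻¹)*y⁻¹ := by rw [hxC.inv_left.eq]
      _ = y*x*(C*y*C)*x⁻¹*y⁻¹ := by group
      _ = y*x*(y*C*y)*x⁻¹*y⁻¹ := by rw [← IH']
      _ = (y*x*y)*(C*y)*x⁻¹*y⁻¹ := by group
      _ = (x*y*x)*(C*y)*x⁻¹*y⁻¹ := by rw [hbr]
      _ = x*y*(x*C)*(y*x⁻¹*y⁻¹) := by group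
      _ = x*y*(C*x)*(y*x⁻¹*y⁻¹) := by rw [hxC.eq]
      _ = x*y*C*(x*y*x⁻¹*y⁻¹) := by group
      _ = x*y*C*(y⁻¹*x) := by rw [e2]
      _ = x * (y*C*y⁻¹) * x := by group

lemma band_triple1 : ∀ t : ℕ, ∀ s r : ℕ, r < s → s < t → t ≤ n - 1 →
    band (n := n) t s * band s r = band t r * band t s := by
  intro t
  induction t using Nat.strong_induction_on with
  | _ t IH =>
  intro s r hrs hst htn
  rcases eq_or_lt_of_le (Nat.succ_le_of_lt hst) with h1 | h1
  · rw [← h1, band_base, band_succ (show r + 1 < s + 1 by omega)]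
    have e : s + 1 - 1 = s := by omega
    rw [e]
    group
  · rw [band_succ h1, band_succ (show r + 1 < t by omega)]
    set y := σ' (n := n) (t-1) with hy
    set B1 := band (n := n) (t-1) s with hB1
    set B2 := band (n := n) (t-1) r with hB2
    set A := band (n := n) s r with hA
    have hyA : Commute y A :=
      comm_sigma'_band s r (t-1) hrs (by omega) (Or.inr (Or.inl (by omega)))
    have IH' : B1 * A = B2 * B1 := IH (t-1) (by omega) s r hrs (by omega) (by omega)
    calc (y*B1*y⁻¹) * A = y*B1*(y⁻¹*A) := by group
      _ = y*B1*(A*y⁻¹) := by rw [hyA.inv_left.eq]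
      _ = y*(B1*A)*y⁻¹ := by group
      _ = y*(B2*B1)*y⁻¹ := by rw [IH']
      _ = (y*B2*y⁻¹) * (y*B1*y⁻¹) := by group

lemma band_triple2 : ∀ t : ℕ, ∀ s r : ℕ, r < s → s < t → t ≤ n - 1 →
    band (n := n) t r * band t s = band s r * band t r := by
  intro t
  induction t using Nat.strong_induction_on with
  | _ t IH =>
  intro s r hrs hst htn
  rcases eq_or_lt_of_le (Nat.succ_le_of_lt hst) with h1 | h1
  · subst h1
    rw [band_base, band_succ (show r + 1 < s + 1 by omega)]
    have e : s + 1 - 1 = s := by omega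
    rw [e]
    set b := σ' (n := n) s with hb
    set A := band (n := n) s r with hA
    have hBR : b * A * b = A * b * A := band_braid s r hrs (by omega)
    calc (b*A*b⁻¹) * b = (b*A*b)*b⁻¹ := by group
      _ = (A*b*A)*b⁻¹ := by rw [hBR]
      _ = A*(b*A*b⁻¹) := by group
  · rw [band_succ h1, band_succ (show r + 1 < t by omega)]
    set y := σ' (n := n) (t-1) with hy
    set B1 := band (n := n) (t-1) s with hB1
    set B2 := band (n := n) (t-1) r with hB2
    set A := band (n := n) s r with hA
    have hyA : Commute y A :=
      comm_sigma'_band s r (t-1) hrs (by omega) (Or.inr (Or.inl (by omega)))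
    have IH' : B2 * B1 = A * B2 := IH (t-1) (by omega) s r hrs (by omega) (by omega)
    calc (y*B2*y⁻¹) * (y*B1*y⁻¹) = y*(B2*B1)*y⁻¹ := by group
      _ = y*(A*B2)*y⁻¹ := by rw [IH']
      _ = (y*A)*B2*y⁻¹ := by group
      _ = (A*y)*B2*y⁻¹ := by rw [hyA.eq]
      _ = A*(y*B2*y⁻¹) := by group

lemma comm_band_band : ∀ r : ℕ, ∀ q t s : ℕ, q < r → s < t → t ≤ n - 1 →
    (r < s ∨ t < q ∨ (s < q ∧ r < t)) →
    Commute (band (n := n) r q) (band t s) := by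
  intro r
  induction r using Nat.strong_induction_on with
  | _ r IH =>
  intro q t s hqr hst htn hcond
  rcases eq_or_lt_of_le (Nat.succ_le_of_lt hqr) with h1 | h1
  · rw [← h1, band_base]
    apply comm_sigma'_band t s q hst htn
    rcases hcond with h | h | h
    · exact Or.inl (by omega)
    · exact Or.inr (Or.inl (by omega))
    · exact Or.inr (Or.inr ⟨by omega, by omega⟩)
  · rw [band_succ h1]
    have cσ : Commute (σ' (n := n) (r-1)) (band t s) := by
      apply comm_sigma'_band t s (r-1) hst htn
      rcases hcond with h | h | h
      · exact Or.inl (by omega)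
      · exact Or.inr (Or.inl (by omega))
      · exact Or.inr (Or.inr ⟨by omega, by omega⟩)
    have cB : Commute (band (n := n) (r-1) q) (band t s) := by
      apply IH (r-1) (by omega) q t s (by omega) hst htn
      rcases hcond with h | h | h
      · exact Or.inl (by omega)
      · exact Or.inr (Or.inl h)
      · exact Or.inr (Or.inr ⟨h.1, by omega⟩)
    exact (cσ.mul_left cB).mul_left cσ.inv_left

end BKL

namespace BKL
variable {n : ℕ}

lemma sign_cases {t s r q : ℕ} (hst : s < t) (hqr : q < r)
    (hpos : ((t:ℤ) - r) * ((t:ℤ) - q) * ((s:ℤ) - r) * ((s:ℤ) - q) > 0) :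
    r < s ∨ t < q ∨ (s < q ∧ r < t) ∨ (q < s ∧ t < r) := by
  rcases Nat.lt_trichotomy r s with h | h | h
  · exact Or.inl h
  · exfalso
    have hz : ((s:ℤ) - r) = 0 := by omega
    rw [hz, mul_zero, zero_mul] at hpos
    exact lt_irrefl _ hpos
  · rcases Nat.lt_trichotomy s q with h2 | h2 | h2
    · rcases Nat.lt_trichotomy t q with h3 | h3 | h3
      · exact Or.inr (Or.inl h3)
      · exfalso
        have hz : ((t:ℤ) - q) = 0 := by omega
        rw [hz, mul_zero, zero_mul, zero_mul] at hpos
        exact lt_irrefl _ hpos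
      · rcases Nat.lt_trichotomy t r with h4 | h4 | h4
        · exfalso
          have f1 : (t:ℤ) - r < 0 := by omega
          have f2 : (t:ℤ) - q > 0 := by omega
          have f3 : (s:ℤ) - r < 0 := by omega
          have f4 : (s:ℤ) - q < 0 := by omega
          have p1 := mul_neg_of_neg_of_pos f1 f2
          have p2 := mul_pos_of_neg_of_neg p1 f3
          have p3 := mul_neg_of_pos_of_neg p2 f4
          linarith
        · exfalso
          have hz : ((t:ℤ) - r) = 0 := by omega
          rw [hz, zero_mul, zero_mul, zero_mul] at hpos
          exact lt_irrefl _ hpos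
        · exact Or.inr (Or.inr (Or.inl ⟨h2, h4⟩))
    · exfalso
      have hz : ((s:ℤ) - q) = 0 := by omega
      rw [hz, mul_zero] at hpos
      exact lt_irrefl _ hpos
    · rcases Nat.lt_trichotomy t r with h3 | h3 | h3
      · exact Or.inr (Or.inr (Or.inr ⟨h2, h3⟩))
      · exfalso
        have hz : ((t:ℤ) - r) = 0 := by omega
        rw [hz, zero_mul, zero_mul, zero_mul] at hpos
        exact lt_irrefl _ hpos
      · exfalso
        have f1 : (t:ℤ) - r > 0 := by omega
        have f2 : (t:ℤ) - q > 0 := by omega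
        have f3 : (s:ℤ) - r < 0 := by omega
        have f4 : (s:ℤ) - q > 0 := by omega
        have p1 := mul_pos f1 f2
        have p2 := mul_neg_of_pos_of_neg p1 f3
        have p3 := mul_neg_of_neg_of_pos p2 f4
        linarith

/-- The map from BKL generators to the braid group. -/
def fphi : BKLGen n → BraidGroup n := fun a => band (a.1.1 : ℕ) (a.1.2 : ℕ)

lemma hphi : ∀ r ∈ bklRels n, FreeGroup.lift (fphi (n := n)) r = 1 := by
  intro w hw
  rcases hw with ⟨a, b, hpos, rfl⟩ | ⟨t, s, r, h1, h2, rfl⟩ | ⟨t, s, r, h1, h2, rfl⟩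
  · simp only [map_mul, map_inv, FreeGroup.lift_apply_of]
    rw [mul_inv_eq_one]
    obtain ⟨⟨t, s⟩, hab⟩ := a
    obtain ⟨⟨r, q⟩, hcd⟩ := b
    have hst : (s : ℕ) < t := hab
    have hqr : (q : ℕ) < r := hcd
    have htn : (t : ℕ) ≤ n - 1 := by have := t.isLt; omega
    have hrn : (r : ℕ) ≤ n - 1 := by have := r.isLt; omega
    rcases sign_cases hst hqr hpos with h | h | h | h
    · exact (comm_band_band r q t s hqr hst htn (Or.inl h)).symm.eq
    · exact (comm_band_band r q t s hqr hst htn (Or.inr (Or.inl h))).symm.eq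
    · exact (comm_band_band r q t s hqr hst htn (Or.inr (Or.inr h))).symm.eq
    · exact (comm_band_band t s r q hst hqr hrn (Or.inr (Or.inr h))).eq
  · show FreeGroup.lift fphi (FreeGroup.of (α := BKLGen n) ⟨(t, s), h1⟩ * FreeGroup.of (α := BKLGen n) ⟨(s, r), h2⟩ * (FreeGroup.of (α := BKLGen n) ⟨(t, r), h2.trans h1⟩ * FreeGroup.of (α := BKLGen n) ⟨(t, s), h1⟩)⁻¹) = 1
    simp only [map_mul, map_inv, FreeGroup.lift_apply_of]
    rw [mul_inv_eq_one]
    have htn : (t : ℕ) ≤ n - 1 := by have := t.isLt; omega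
    have e := fun x : BKLGen n => FreeGroup.lift_apply_of (f := fphi (n := n)) (x := x)
    rw [e ⟨(t, s), h1⟩, e ⟨(s, r), h2⟩, e ⟨(t, r), h2.trans h1⟩]
    exact band_triple1 t s r h2 h1 htn
  · show FreeGroup.lift fphi (FreeGroup.of (α := BKLGen n) ⟨(t, r), h2.trans h1⟩ * FreeGroup.of (α := BKLGen n) ⟨(t, s), h1⟩ * (FreeGroup.of (α := BKLGen n) ⟨(s, r), h2⟩ * FreeGroup.of (α := BKLGen n) ⟨(t, r), h2.trans h1⟩)⁻¹) = 1
    simp only [map_mul, map_inv, FreeGroup.lift_apply_of]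
    rw [mul_inv_eq_one]
    have htn : (t : ℕ) ≤ n - 1 := by have := t.isLt; omega
    have e := fun x : BKLGen n => FreeGroup.lift_apply_of (f := fphi (n := n)) (x := x)
    rw [e ⟨(t, s), h1⟩, e ⟨(s, r), h2⟩, e ⟨(t, r), h2.trans h1⟩]
    exact band_triple2 t s r h2 h1 htn

/-- The BKL generator `a_{ts}` as element of the presented BKL group, from ℕ data. -/
def agen (t s : ℕ) (ht : t < n) (hs : s < n) (hst : s < t) :
    PresentedGroup (bklRels n) :=
  PresentedGroup.of ⟨(⟨t, ht⟩, ⟨s, hs⟩), Fin.mk_lt_mk.mpr hst⟩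

lemma bkl_rel2 (t s r : Fin n) (h1 : s < t) (h2 : r < s) :
    (PresentedGroup.of ⟨(t,s),h1⟩ : PresentedGroup (bklRels n)) *
      PresentedGroup.of ⟨(s,r),h2⟩ =
    PresentedGroup.of ⟨(t,r),h2.trans h1⟩ * PresentedGroup.of ⟨(t,s),h1⟩ := by
  have h := presented_rel (rels := bklRels n)
    (Or.inr (Or.inl ⟨t, s, r, h1, h2, rfl⟩))
  change PresentedGroup.mk (bklRels n) (FreeGroup.of (α := BKLGen n) ⟨(t, s), h1⟩ * FreeGroup.of (α := BKLGen n) ⟨(s, r), h2⟩ * (FreeGroup.of (α := BKLGen n) ⟨(t, r), h2.trans h1⟩ * FreeGroup.of (α := BKLGen n) ⟨(t, s), h1⟩)⁻¹) = 1 at h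
  rwa [map_mul, map_mul, map_inv, map_mul, mul_inv_eq_one] at h

lemma bkl_rel3 (t s r : Fin n) (h1 : s < t) (h2 : r < s) :
    (PresentedGroup.of ⟨(t,r),h2.trans h1⟩ : PresentedGroup (bklRels n)) *
      PresentedGroup.of ⟨(t,s),h1⟩ =
    PresentedGroup.of ⟨(s,r),h2⟩ * PresentedGroup.of ⟨(t,r),h2.trans h1⟩ := by
  have h := presented_rel (rels := bklRels n)
    (Or.inr (Or.inr ⟨t, s, r, h1, h2, rfl⟩))
  change PresentedGroup.mk (bklRels n) (FreeGroup.of (α := BKLGen n) ⟨(t, r), h2.trans h1⟩ * FreeGroup.of (α := BKLGen n) ⟨(t, s), h1⟩ * (FreeGroup.of (α := BKLGen n) ⟨(s, r), h2⟩ * FreeGroup.of (α := BKLGen n) ⟨(t, r), h2.trans h1⟩)⁻¹) = 1 at h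
  rwa [map_mul, map_mul, map_inv, map_mul, mul_inv_eq_one] at h

/-- The map from braid generators to the BKL presented group. -/
def fpsi : Fin (n-1) → PresentedGroup (bklRels n) := fun i =>
  agen ((i : ℕ) + 1) (i : ℕ) (by have := i.isLt; omega) (by have := i.isLt; omega)
    (Nat.lt_succ_self _)

lemma agen_eq {t s t' s' : ℕ} (ht : t < n) (hs : s < n) (hst : s < t)
    (ht' : t' < n) (hs' : s' < n) (hst' : s' < t') (e1 : t = t') (e2 : s = s') :
    agen (n := n) t s ht hs hst = agen t' s' ht' hs' hst' := by
  subst e1; subst e2; rfl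

lemma braid_from_triple {G : Type*} [Group G] {A B C : G}
    (e1 : A * B = C * A) (e2 : C * A = B * C) : B * A * B = A * B * A := by
  have hAB : A * B = B * C := e1.trans e2
  calc B * A * B = B*(A*B) := by group
    _ = B*(C*A) := by rw [e1]
    _ = (B*C)*A := by group
    _ = (A*B)*A := by rw [← hAB]
    _ = A*B*A := by group

lemma hpsi : ∀ r ∈ braidRels (n-1), FreeGroup.lift (fpsi (n := n)) r = 1 := by
  intro w hw
  rcases hw with ⟨i, j, hij, rfl⟩ | ⟨i, j, hij, rfl⟩
  · simp only [map_mul, map_inv, FreeGroup.lift_apply_of]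
    have hcomm : fpsi (n := n) i * fpsi j = fpsi j * fpsi i := by
      unfold fpsi agen
      have hin := i.isLt; have hjn := j.isLt
      have f1 : ((i:ℕ)+1:ℤ) - ((j:ℕ)+1) < 0 := by omega
      have f2 : ((i:ℕ)+1:ℤ) - (j:ℕ) < 0 := by omega
      have f3 : ((i:ℕ):ℤ) - ((j:ℕ)+1) < 0 := by omega
      have f4 : ((i:ℕ):ℤ) - (j:ℕ) < 0 := by omega
      have h := presented_rel (rels := bklRels n)
        (Or.inl ⟨⟨(⟨(i:ℕ)+1, by omega⟩, ⟨(i:ℕ), by omega⟩), Fin.mk_lt_mk.mpr (Nat.lt_succ_self _)⟩,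
          ⟨(⟨(j:ℕ)+1, by omega⟩, ⟨(j:ℕ), by omega⟩), Fin.mk_lt_mk.mpr (Nat.lt_succ_self _)⟩,
          by
            simp only [Fin.val_mk]
            push_cast
            have p1 := mul_neg_of_neg_of_pos f1 (by omega : (0:ℤ) < 1)
            have q1 := mul_pos_of_neg_of_neg f1 f2
            have q2 := mul_neg_of_pos_of_neg q1 f3
            have q3 := mul_pos_of_neg_of_neg q2 f4
            convert q3 using 2 <;> push_cast <;> ring,
          rfl⟩)
      rwa [map_mul, map_mul, map_inv, map_mul, mul_inv_eq_one] at h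
    rw [mul_inv_eq_one, mul_inv_eq_iff_eq_mul]
    exact hcomm
  · -- braid relation case
    simp only [map_mul, map_inv, FreeGroup.lift_apply_of]
    rw [mul_inv_eq_one]
    have hin := i.isLt; have hjn := j.isLt
    have p0 : (i:ℕ) < n := by omega
    have p1 : (i:ℕ)+1 < n := by omega
    have p2 : (i:ℕ)+2 < n := by omega
    have h1 : (⟨(i:ℕ)+1, p1⟩ : Fin n) < ⟨(i:ℕ)+2, p2⟩ := Fin.mk_lt_mk.mpr (by omega)
    have h2 : (⟨(i:ℕ), p0⟩ : Fin n) < ⟨(i:ℕ)+1, p1⟩ := Fin.mk_lt_mk.mpr (by omega)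
    have e1 := bkl_rel2 (n := n) ⟨(i:ℕ)+2, p2⟩ ⟨(i:ℕ)+1, p1⟩ ⟨(i:ℕ), p0⟩ h1 h2
    have e2 := bkl_rel3 (n := n) ⟨(i:ℕ)+2, p2⟩ ⟨(i:ℕ)+1, p1⟩ ⟨(i:ℕ), p0⟩ h1 h2
    have hBi : fpsi (n := n) i =
        PresentedGroup.of ⟨(⟨(i:ℕ)+1, p1⟩, ⟨(i:ℕ), p0⟩), h2⟩ := rfl
    have hAj : fpsi (n := n) j =
        PresentedGroup.of ⟨(⟨(i:ℕ)+2, p2⟩, ⟨(i:ℕ)+1, p1⟩), h1⟩ := by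
      unfold fpsi agen
      exact congrArg _ (Subtype.ext (by
        simp only [Prod.mk.injEq, Fin.mk.injEq]
        omega))
    rw [hBi, hAj]
    exact braid_from_triple e1 e2

end BKL

namespace BKL
variable {n : ℕ}

/-- The homomorphism from the BKL presented group to the braid group. -/
def phiH : PresentedGroup (bklRels n) →* BraidGroup n := PresentedGroup.toGroup hphi

/-- The homomorphism from the braid group to the BKL presented group. -/
def psiH : BraidGroup n →* PresentedGroup (bklRels n) := PresentedGroup.toGroup hpsi

lemma agen_rel2 (t s r : ℕ) (ht : t < n) (hs : s < n) (hr : r < n)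
    (h1 : s < t) (h2 : r < s) :
    agen t s ht hs h1 * agen s r hs hr h2 =
      agen t r ht hr (h2.trans h1) * agen t s ht hs h1 :=
  bkl_rel2 ⟨t, ht⟩ ⟨s, hs⟩ ⟨r, hr⟩ (Fin.mk_lt_mk.mpr h1) (Fin.mk_lt_mk.mpr h2)

lemma psiH_sigma' (k t : ℕ) (hk : k < n - 1) (e : t = k + 1) (ht : t < n) (hs : k < n)
    (hst : k < t) :
    psiH (σ' (n := n) k) = agen t k ht hs hst := by
  subst e
  rw [σ', dif_pos hk]
  show psiH (PresentedGroup.of ⟨k, hk⟩) = _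
  have h := PresentedGroup.toGroup.of (f := fpsi (n := n)) hpsi (x := ⟨k, hk⟩)
  exact h

lemma psiH_band : ∀ t s : ℕ, ∀ (hst : s < t) (_ : t ≤ n - 1) (ht : t < n) (hs : s < n),
    psiH (band (n := n) t s) = agen t s ht hs hst := by
  intro t
  induction t using Nat.strong_induction_on with
  | _ t IH =>
  intro s hst htn ht hs
  rcases eq_or_lt_of_le (Nat.succ_le_of_lt hst) with h1 | h1
  · subst h1
    rw [band_base]
    exact psiH_sigma' s (s+1) (by omega) rfl ht hs hst
  · rw [band_succ h1, map_mul, map_mul, map_inv]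
    rw [psiH_sigma' (t-1) t (by omega) (by omega) ht (by omega) (by omega)]
    rw [IH (t-1) (by omega) s (by omega) (by omega) (by omega) hs]
    have hrel := agen_rel2 t (t-1) s ht (by omega) hs (by omega) (by omega)
    set X := agen (n := n) t (t-1) ht (by omega) (by omega)
    calc agen t (t-1) ht (by omega) (by omega) * agen (t-1) s (by omega) hs (by omega) *
          (agen t (t-1) ht (by omega) (by omega))⁻¹
        = agen t (t-1) ht (by omega) (by omega) * agen (t-1) s (by omega) hs (by omega) *
          (agen t (t-1) ht (by omega) (by omega))⁻¹ := rfl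
      _ = agen t s ht hs hst * agen t (t-1) ht (by omega) (by omega) *
          (agen t (t-1) ht (by omega) (by omega))⁻¹ := by rw [hrel]
      _ = agen t s ht hs hst := by group

end BKL

/-- **Birman–Ko–Lee.** The group presented by generators `a_{ts}` (`s < t`) and the
Birman–Ko–Lee relations is isomorphic to the braid group `Br_n` via
`a_{ts} ↦ (σ_{t-1} ⋯ σ_{s+1}) σ_s (σ_{s+1}⁻¹ ⋯ σ_{t-1}⁻¹)`. -/
theorem birman_ko_lee_presentation (n : ℕ) :
    ∃ φ : PresentedGroup (bklRels n) ≃* BraidGroup n,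
      ∀ (t s : Fin n) (h : s < t),
        φ (PresentedGroup.of (⟨(t, s), h⟩ : BKLGen n)) = band (t : ℕ) (s : ℕ) := by
  have h1 : (BKL.psiH (n := n)).comp (BKL.phiH (n := n)) = MonoidHom.id _ := by
    ext x
    obtain ⟨⟨t, s⟩, h⟩ := x
    simp only [MonoidHom.comp_apply, MonoidHom.id_apply]
    show BKL.psiH (BKL.phiH (PresentedGroup.of ⟨(t, s), h⟩)) = _
    rw [BKL.phiH]; refine (congrArg BKL.psiH (PresentedGroup.toGroup.of BKL.hphi)).trans ?_
    have hst : (s : ℕ) < (t : ℕ) := h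
    exact BKL.psiH_band (t : ℕ) (s : ℕ) hst (by have := t.isLt; omega) t.isLt s.isLt
  have h2 : (BKL.phiH (n := n)).comp (BKL.psiH (n := n)) = MonoidHom.id _ := by
    ext i
    simp only [MonoidHom.comp_apply, MonoidHom.id_apply]
    show BKL.phiH (BKL.psiH (PresentedGroup.of i)) = _
    rw [BKL.psiH, PresentedGroup.toGroup.of]
    show BKL.phiH (BKL.fpsi i) = _
    rw [BKL.phiH, BKL.fpsi, BKL.agen]; refine (PresentedGroup.toGroup.of BKL.hphi).trans ?_
    show band ((i : ℕ) + 1) (i : ℕ) = _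
    rw [BKL.band_base]
    rw [σ', dif_pos i.isLt]
    rfl
  refine ⟨MonoidHom.toMulEquiv (BKL.phiH (n := n)) (BKL.psiH (n := n)) h1 h2, ?_⟩
  intro t s h
  show BKL.phiH (PresentedGroup.of ⟨(t, s), h⟩) = band (t : ℕ) (s : ℕ)
  rw [BKL.phiH]; exact PresentedGroup.toGroup.of BKL.hphi
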